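/- Let b be a finite Blaschke product of degree κ with zeros in the open unit disk, and let t_0 be a point on the unit circle. Then the (unrestricted) limit of (1 - |b(z)|²)/(1 - |z|²) as z → t_0 with z in the open unit disk exists, is finite, and is strictly positive. -/

import Mathlib

lemma tele (x : ℕ → ℝ) : ∀ n, 1 - ∏ i ∈ Finset.range n, x i =
    ∑ j ∈ Finset.range n, (∏ i ∈ Finset.range j, x i) * (1 - x j) := by
  intro n
  induction n with
  | zero => simp
  | succ n ih => rw [Finset.prod_range_succ, Finset.sum_range_succ, ← ih]; ring

lemma key_normSq (z w : ℂ) :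
    Complex.normSq (1 - z * (starRingEnd ℂ) w) - Complex.normSq (z - w) =
      (1 - Complex.normSq z) * (1 - Complex.normSq w) := by
  simp [Complex.normSq_apply, Complex.mul_re, Complex.mul_im, Complex.sub_re, Complex.sub_im]
  ring

lemma contAux (w t : ℂ) (h : 1 - t * (starRingEnd ℂ) w ≠ 0) :
    ContinuousAt (fun z : ℂ => ‖(z - w) / (1 - z * (starRingEnd ℂ) w)‖ ^ 2) t := by
  apply ContinuousAt.pow
  apply continuous_norm.continuousAt.comp
  exact ContinuousAt.div (continuousAt_id.sub continuousAt_const)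
    (continuousAt_const.sub (continuousAt_id.mul continuousAt_const)) h

lemma contAux2 (w t : ℂ) (a : ℝ) (h : 1 - t * (starRingEnd ℂ) w ≠ 0) :
    ContinuousAt (fun z : ℂ => a / ‖1 - z * (starRingEnd ℂ) w‖ ^ 2) t := by
  apply ContinuousAt.div continuousAt_const
  · exact (continuous_norm.continuousAt.comp
      (continuousAt_const.sub (continuousAt_id.mul continuousAt_const))).pow 2
  · exact pow_ne_zero 2 (norm_ne_zero_iff.mpr h)

lemma ne_one_sub (z w : ℂ) (hz : ‖z‖ ≤ 1) (hw : ‖w‖ < 1) :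
    1 - z * (starRingEnd ℂ) w ≠ 0 := by
  intro h
  rw [sub_eq_zero] at h
  have h2 := congrArg (‖·‖) h.symm
  rw [norm_mul, Complex.norm_conj, norm_one] at h2
  nlinarith [norm_nonneg z, norm_nonneg w]

theorem stmt_1 (κ : ℕ) (hκ : 1 ≤ κ) (c : Fin κ → ℂ) (hc : ∀ j, ‖c j‖ < 1)
    (t₀ : ℂ) (ht : ‖t₀‖ = 1) :
    ∃ L : ℝ, 0 < L ∧ Filter.Tendsto
      (fun z : ℂ => (1 - ‖∏ j, (z - c j) / (1 - z * (starRingEnd ℂ) (c j))‖ ^ 2) /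
        (1 - ‖z‖ ^ 2))
      (nhdsWithin t₀ (Metric.ball 0 1)) (nhds L) := by
  classical
  set c' : ℕ → ℂ := fun n => if h : n < κ then c ⟨n, h⟩ else 0 with hc'def
  have hc' : ∀ n, ‖c' n‖ < 1 := by
    intro n
    by_cases h : n < κ
    · simp only [hc'def, dif_pos h]; exact hc _
    · simp [hc'def, dif_neg h]
  set x : ℕ → ℂ → ℝ := fun n z => ‖(z - c' n) / (1 - z * (starRingEnd ℂ) (c' n))‖ ^ 2
    with hxdef
  set g : ℂ → ℝ := fun z => ∑ j ∈ Finset.range κ, (∏ i ∈ Finset.range j, x i z) *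
      ((1 - ‖c' j‖ ^ 2) / ‖1 - z * (starRingEnd ℂ) (c' j)‖ ^ 2)
    with hgdef
  -- positivity of g t₀
  have hgpos : 0 < g t₀ := by
    rw [hgdef]
    apply Finset.sum_pos
    · intro j hj
      apply mul_pos
      · apply Finset.prod_pos
        intro i hi
        have hnum : t₀ - c' i ≠ 0 := by
          intro h
          rw [sub_eq_zero] at h
          rw [h] at ht
          exact absurd ht (hc' i).ne
        have hden : (1 : ℂ) - t₀ * (starRingEnd ℂ) (c' i) ≠ 0 := ne_one_sub _ _ ht.le (hc' i)
        simp only [hxdef]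
        exact pow_pos (norm_pos_iff.mpr (div_ne_zero hnum hden)) 2
      · have hden : (1 : ℂ) - t₀ * (starRingEnd ℂ) (c' j) ≠ 0 := ne_one_sub _ _ ht.le (hc' j)
        have h1 : ‖c' j‖ ^ 2 < 1 := by nlinarith [norm_nonneg (c' j), hc' j]
        exact div_pos (by linarith) (pow_pos (norm_pos_iff.mpr hden) 2)
    · exact Finset.nonempty_range_iff.mpr (by omega)
  refine ⟨g t₀, hgpos, ?_⟩
  -- original function equals g on the ball
  have hball : ∀ z ∈ Metric.ball (0 : ℂ) 1,
      g z = (1 - ‖∏ j, (z - c j) / (1 - z * (starRingEnd ℂ) (c j))‖ ^ 2) /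
        (1 - ‖z‖ ^ 2) := by
    intro z hz
    have hza : ‖z‖ < 1 := by
      simpa [Complex.dist_eq] using hz
    have hA : ‖∏ j, (z - c j) / (1 - z * (starRingEnd ℂ) (c j))‖ ^ 2
        = ∏ n ∈ Finset.range κ, x n z := by
      rw [norm_prod, ← Finset.prod_pow]
      rw [← Fin.prod_univ_eq_prod_range (fun n => x n z) κ]
      apply Finset.prod_congr rfl
      intro j _
      simp only [hxdef, hc'def, dif_pos j.isLt, Fin.eta]
    rw [hA, tele, Finset.sum_div, hgdef]
    apply Finset.sum_congr rfl
    intro j hj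
    rw [mul_div_assoc]
    congr 1
    -- per-factor identity
    have hden : (1 : ℂ) - z * (starRingEnd ℂ) (c' j) ≠ 0 := ne_one_sub _ _ hza.le (hc' j)
    have hdenR : Complex.normSq (1 - z * (starRingEnd ℂ) (c' j)) ≠ 0 := fun h => hden (Complex.normSq_eq_zero.mp h)
    have hzR : (1 : ℝ) - Complex.normSq z ≠ 0 := by
      have : Complex.normSq z < 1 := by
        rw [Complex.normSq_eq_norm_sq]; nlinarith [norm_nonneg z]
      linarith
    simp only [hxdef, norm_div, div_pow, Complex.sq_norm]
    field_simp
    linear_combination (-1 : ℝ) * key_normSq z (c' j)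
  -- continuity of g at t₀
  have hg : Filter.Tendsto g (nhds t₀) (nhds (g t₀)) := by
    rw [hgdef]
    apply tendsto_finset_sum
    intro j hj
    apply Filter.Tendsto.mul
    · apply tendsto_finset_prod
      intro i hi
      have hden : (1 : ℂ) - t₀ * (starRingEnd ℂ) (c' i) ≠ 0 := ne_one_sub _ _ ht.le (hc' i)
      simp only [hxdef]
      exact contAux (c' i) t₀ hden
    · have hden : (1 : ℂ) - t₀ * (starRingEnd ℂ) (c' j) ≠ 0 := ne_one_sub _ _ ht.le (hc' j)
      exact contAux2 (c' j) t₀ _ hden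
  have hgW : Filter.Tendsto g (nhdsWithin t₀ (Metric.ball 0 1)) (nhds (g t₀)) :=
    hg.mono_left nhdsWithin_le_nhds
  exact hgW.congr' (by filter_upwards [self_mem_nhdsWithin] with z hz using hball z hz)
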